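/- Descent lemma for one masked gradient step (deterministic version): Let ∇F be L-Lipschitz, let Θ' = Θ − γ∇F(Θ ⊙ m) with step size 0 < γ ≤ 1/(6L), and suppose ‖Θ ⊙ m − Θ‖ ≤ δ‖Θ₀‖. Then F(Θ') ≤ F(Θ) − (γ/3)‖∇F(Θ)‖² + (2γL²δ²/3)‖Θ₀‖². -/

import Mathlib

open RealInnerProductSpace

private lemma descent_aux {d : ℕ} (F : EuclideanSpace ℝ (Fin d) → ℝ)
    (G : EuclideanSpace ℝ (Fin d) → EuclideanSpace ℝ (Fin d))
    (L : ℝ) (hL : 0 ≤ L)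
    (hgrad : ∀ x, HasGradientAt F (G x) x)
    (hlip : ∀ x y, ‖G x - G y‖ ≤ L * ‖x - y‖)
    (x y : EuclideanSpace ℝ (Fin d)) :
    F y ≤ F x + ⟪G x, y - x⟫ + L / 2 * ‖y - x‖ ^ 2 := by
  set v := y - x with hv
  have hline : ∀ t : ℝ, HasDerivAt (fun s : ℝ => x + s • v) v t := by
    intro t
    simpa using ((hasDerivAt_id t).smul_const v).const_add x
  have hcomp : ∀ t : ℝ, HasDerivAt (fun s : ℝ => F (x + s • v)) ⟪G (x + t • v), v⟫ t := by
    intro t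
    have h := ((hgrad (x + t • v)).hasFDerivAt).comp_hasDerivAt t (hline t)
    simp only [InnerProductSpace.toDual_apply_apply] at h
    exact h
  set h : ℝ → ℝ := fun t => F x + t * ⟪G x, v⟫ + L / 2 * t ^ 2 * ‖v‖ ^ 2 - F (x + t • v)
    with hdef
  have hh : ∀ t : ℝ, HasDerivAt h
      (⟪G x, v⟫ + L * t * ‖v‖ ^ 2 - ⟪G (x + t • v), v⟫) t := by
    intro t
    have h1 : HasDerivAt (fun s : ℝ => F x + s * ⟪G x, v⟫ + L / 2 * s ^ 2 * ‖v‖ ^ 2)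
        (⟪G x, v⟫ + L * t * ‖v‖ ^ 2) t := by
      have ha : HasDerivAt (fun s : ℝ => F x + s * ⟪G x, v⟫) ⟪G x, v⟫ t := by
        simpa using ((hasDerivAt_id t).mul_const ⟪G x, v⟫).const_add (F x)
      have hb : HasDerivAt (fun s : ℝ => L / 2 * s ^ 2 * ‖v‖ ^ 2)
          (L / 2 * (2 * t ^ 1) * ‖v‖ ^ 2) t :=
        ((hasDerivAt_pow 2 t).const_mul (L / 2)).mul_const (‖v‖ ^ 2)
      have := ha.add hb
      rw [show ⟪G x, v⟫ + L * t * ‖v‖ ^ 2 = ⟪G x, v⟫ + L / 2 * (2 * t ^ 1) * ‖v‖ ^ 2 by ring]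
      exact this
    exact h1.sub (hcomp t)
  have hdiff : Differentiable ℝ h := fun t => (hh t).differentiableAt
  have hmono : MonotoneOn h (Set.Icc (0 : ℝ) 1) := by
    apply monotoneOn_of_deriv_nonneg (convex_Icc 0 1) hdiff.continuous.continuousOn
      hdiff.differentiableOn
    intro t ht
    rw [interior_Icc] at ht
    rw [(hh t).deriv]
    have hcs : ⟪G (x + t • v) - G x, v⟫ ≤ ‖G (x + t • v) - G x‖ * ‖v‖ :=
      real_inner_le_norm _ _
    have hl : ‖G (x + t • v) - G x‖ ≤ L * ‖(x + t • v) - x‖ := hlip _ _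
    have hns : ‖(x + t • v) - x‖ = t * ‖v‖ := by
      rw [add_sub_cancel_left, norm_smul, Real.norm_eq_abs, abs_of_pos ht.1]
    rw [hns] at hl
    have hexp : ⟪G (x + t • v) - G x, v⟫ = ⟪G (x + t • v), v⟫ - ⟪G x, v⟫ :=
      inner_sub_left _ _ _
    have hvn : (0:ℝ) ≤ ‖v‖ := norm_nonneg _
    nlinarith [norm_nonneg (G (x + t • v) - G x)]
  have h01 : h 0 ≤ h 1 := hmono (by simp) (by norm_num) (by norm_num)
  have h0 : h 0 = 0 := by simp [hdef]
  have h1v : h 1 = F x + ⟪G x, v⟫ + L / 2 * ‖v‖ ^ 2 - F y := by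
    simp [hdef, hv]
  rw [h0, h1v] at h01
  linarith

set_option maxHeartbeats 1000000 in
/-- Deterministic descent for one masked gradient step:
`F(Θ − γ∇F(Θ⊙m)) ≤ F(Θ) − (γ/3)‖∇F(Θ)‖² + (2γL²δ²/3)‖Θ₀‖²` for `0 < γ ≤ 1/(6L)`. -/
theorem masked_step_descent {d : ℕ} (F : EuclideanSpace ℝ (Fin d) → ℝ)
    (G : EuclideanSpace ℝ (Fin d) → EuclideanSpace ℝ (Fin d))
    (L δ γ : ℝ) (hL : 0 < L) (hδ : 0 ≤ δ) (hγ : 0 < γ) (hγL : γ ≤ 1 / (6 * L))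
    (hgrad : ∀ x, HasGradientAt F (G x) x)
    (hlip : ∀ x y, ‖G x - G y‖ ≤ L * ‖x - y‖)
    (Θ Θ₀ m : EuclideanSpace ℝ (Fin d))
    (hm : ∀ j, m j = 0 ∨ m j = 1)
    (Θm : EuclideanSpace ℝ (Fin d)) (hΘm : ∀ j, Θm j = Θ j * m j)
    (hmask : ‖Θm - Θ‖ ≤ δ * ‖Θ₀‖) :
    F (Θ - γ • G Θm)
      ≤ F Θ - γ / 3 * ‖G Θ‖ ^ 2 + 2 * γ * L ^ 2 * δ ^ 2 / 3 * ‖Θ₀‖ ^ 2 := by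
  set g := G Θm with hg
  set e := G Θm - G Θ with he
  have key := descent_aux F G L hL.le hgrad hlip Θ (Θ - γ • g)
  have hvy : (Θ - γ • g) - Θ = -(γ • g) := by abel
  rw [hvy] at key
  have hinner : ⟪G Θ, -(γ • g)⟫ = -(γ * ⟪G Θ, g⟫) := by
    rw [inner_neg_right, real_inner_smul_right]
  have hnorm : ‖-(γ • g)‖ = γ * ‖g‖ := by
    rw [norm_neg, norm_smul, Real.norm_eq_abs, abs_of_pos hγ]
  rw [hinner, hnorm] at key
  -- bound on the error
  have hE : ‖e‖ ≤ L * (δ * ‖Θ₀‖) := by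
    calc ‖e‖ ≤ L * ‖Θm - Θ‖ := hlip _ _
    _ ≤ L * (δ * ‖Θ₀‖) := by exact mul_le_mul_of_nonneg_left hmask hL.le
  have hge : g = G Θ + e := by rw [he]; abel
  have hinn2 : ⟪G Θ, g⟫ = ‖G Θ‖ ^ 2 + ⟪G Θ, e⟫ := by
    rw [hge, inner_add_right, real_inner_self_eq_norm_sq]
  have hcs : |⟪G Θ, e⟫| ≤ ‖G Θ‖ * ‖e‖ := abs_real_inner_le_norm _ _
  have hgn : ‖g‖ ≤ ‖G Θ‖ + ‖e‖ := by
    rw [hge]; exact norm_add_le _ _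
  have hγL' : γ * L ≤ 1 / 6 := by
    have h6 : γ * (6 * L) ≤ 1 := (le_div_iff₀ (by positivity)).mp hγL
    nlinarith
  have habs := abs_le.mp hcs
  have hA : (0:ℝ) ≤ ‖G Θ‖ := norm_nonneg _
  have hEn : (0:ℝ) ≤ ‖e‖ := norm_nonneg _
  have hgnn : (0:ℝ) ≤ ‖g‖ := norm_nonneg _
  have hT : (0:ℝ) ≤ ‖Θ₀‖ := norm_nonneg _
  have hg2 : ‖g‖ ^ 2 ≤ 2 * ‖G Θ‖ ^ 2 + 2 * ‖e‖ ^ 2 := by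
    nlinarith [mul_self_le_mul_self hgnn hgn, sq_nonneg (‖G Θ‖ - ‖e‖)]
  have hE2 : ‖e‖ ^ 2 ≤ L ^ 2 * δ ^ 2 * ‖Θ₀‖ ^ 2 := by
    nlinarith [mul_self_le_mul_self hEn hE]
  have p1 : ‖G Θ‖ ^ 2 - ‖e‖ ^ 2 ≤ 2 * ⟪G Θ, g⟫ := by
    nlinarith [habs.1, sq_nonneg (‖G Θ‖ - ‖e‖)]
  have q1 : γ * (‖G Θ‖ ^ 2 - ‖e‖ ^ 2) ≤ γ * (2 * ⟪G Θ, g⟫) :=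
    mul_le_mul_of_nonneg_left p1 hγ.le
  have q2 : L / 2 * (γ * ‖g‖) ^ 2 ≤ γ / 12 * ‖g‖ ^ 2 := by
    nlinarith [mul_le_mul_of_nonneg_right hγL' (mul_nonneg hγ.le (sq_nonneg ‖g‖))]
  have q3 : γ / 12 * ‖g‖ ^ 2 ≤ γ / 12 * (2 * ‖G Θ‖ ^ 2 + 2 * ‖e‖ ^ 2) :=
    mul_le_mul_of_nonneg_left hg2 (by positivity)
  have q4 : γ * ‖e‖ ^ 2 ≤ γ * (L ^ 2 * δ ^ 2 * ‖Θ₀‖ ^ 2) :=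
    mul_le_mul_of_nonneg_left hE2 hγ.le
  linarith
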